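/- The metric space Y of coset partitions of F_n with the metric ρ is not uniformly discrete: for every ε > 0 there exist distinct points P ≠ P' in Y with ρ(P,P') ≤ ε. -/

import Mathlib

/-- The right coset `Hα = {hα : h ∈ H}` of a subgroup `H`. -/
def rcoset {G : Type*} [Group G] (H : Subgroup G) (α : G) : Set G := {g | g * α⁻¹ ∈ H}

/-- `{H_i α_i}` is a coset partition of `G`: every element lies in exactly one coset. -/
def IsCosetPartition {G : Type*} [Group G] {s : ℕ} (H : Fin s → Subgroup G)
    (α : Fin s → G) : Prop :=
  ∀ g : G, ∃! i : Fin s, g ∈ rcoset (H i) (α i)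

/-- A point of the space `Y`: a tuple `(H_s, ..., H_1)` of finite-index subgroups, ordered
by nonincreasing index, arising from some coset partition of the group. -/
def IsPartitionTuple {G : Type*} [Group G] (L : List (Subgroup G)) : Prop :=
  L.Pairwise (fun H K => K.index ≤ H.index) ∧
  (∀ H ∈ L, H.FiniteIndex ∧ 1 < H.index) ∧
  ∃ α : Fin L.length → G, IsCosetPartition (fun i => L.get i) α

open Classical in
/-- First position (counting from 1) at which two lists disagree. -/
noncomputable def firstDiff {α : Type*} : List α → List α → ℕ
  | a :: P, b :: P' => if a = b then firstDiff P P' + 1 else 1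
  | _, _ => 1

open Classical in
/-- The metric `ρ(P,P') = 2^{-k}`, `k` the first place of disagreement, `0` if equal. -/
noncomputable def pdist {α : Type*} (P P' : List α) : ℝ :=
  if P = P' then 0 else (2 : ℝ)⁻¹ ^ firstDiff P P'

/-! ### Auxiliary constructions -/

/-- The homomorphism to `ℤ` sending every generator to `1`. -/
noncomputable def phiAux (n : ℕ) : FreeGroup (Fin n) →* Multiplicative ℤ :=
  FreeGroup.lift fun _ => Multiplicative.ofAdd 1

/-- The "total exponent" of a word. -/
noncomputable def vAux (n : ℕ) (g : FreeGroup (Fin n)) : ℤ := (phiAux n g).toAdd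

/-- The composite homomorphism to `ZMod m`. -/
noncomputable def psiAux (n m : ℕ) : FreeGroup (Fin n) →* Multiplicative (ZMod m) :=
  (AddMonoidHom.toMultiplicative (Int.castAddHom (ZMod m))).comp (phiAux n)

/-- The index-`m` subgroup of words with total exponent divisible by `m`. -/
noncomputable def Asub (n m : ℕ) : Subgroup (FreeGroup (Fin n)) := (psiAux n m).ker

lemma mem_Asub {n m : ℕ} {g : FreeGroup (Fin n)} :
    g ∈ Asub n m ↔ (m : ℤ) ∣ vAux n g := by
  rw [Asub, MonoidHom.mem_ker, psiAux]
  rw [← ZMod.intCast_zmod_eq_zero_iff_dvd]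
  constructor
  · intro h
    have := congrArg Multiplicative.toAdd h
    simpa [vAux] using this
  · intro h
    simp only [MonoidHom.comp_apply]
    have : ((vAux n g : ℤ) : ZMod m) = 0 := h
    simp [vAux] at this ⊢
    exact this

lemma vAux_xpow {n : ℕ} (hn : 0 < n) (r : ℤ) :
    vAux n ((FreeGroup.of (⟨0, hn⟩ : Fin n)) ^ r) = r := by
  simp [vAux, phiAux, map_zpow]

lemma vAux_mul {n : ℕ} (a b : FreeGroup (Fin n)) :
    vAux n (a * b) = vAux n a + vAux n b := by
  simp [vAux, map_mul]

lemma vAux_inv {n : ℕ} (a : FreeGroup (Fin n)) : vAux n a⁻¹ = - vAux n a := by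
  simp [vAux, map_inv]

lemma mem_rcoset_Asub {n m : ℕ} (hn : 0 < n) (r : ℤ) (g : FreeGroup (Fin n)) :
    g ∈ rcoset (Asub n m) ((FreeGroup.of (⟨0, hn⟩ : Fin n)) ^ r) ↔
      (m : ℤ) ∣ vAux n g - r := by
  rw [rcoset, Set.mem_setOf_eq, mem_Asub, vAux_mul, vAux_inv, vAux_xpow hn,
    ← sub_eq_add_neg]

lemma psiAux_surjective {n : ℕ} (hn : 0 < n) (m : ℕ) :
    Function.Surjective (psiAux n m) := by
  intro c
  obtain ⟨z, hz⟩ := ZMod.intCast_surjective (n := m) c.toAdd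
  refine ⟨(FreeGroup.of (⟨0, hn⟩ : Fin n)) ^ z, ?_⟩
  have h1 : (psiAux n m) ((FreeGroup.of (⟨0, hn⟩ : Fin n)) ^ z)
      = (psiAux n m) (FreeGroup.of (⟨0, hn⟩ : Fin n)) ^ z := map_zpow _ _ _
  rw [h1]
  apply Multiplicative.toAdd.injective
  simp [psiAux, phiAux]
  rw [← hz]

lemma index_Asub {n : ℕ} (hn : 0 < n) (m : ℕ) : (Asub n m).index = m := by
  rw [Asub, Subgroup.index_ker]
  rw [MonoidHom.range_eq_top.mpr (psiAux_surjective hn m)]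
  rw [Subgroup.card_top]
  rw [Nat.card_congr (Multiplicative.toAdd (α := ZMod m))]
  exact Nat.card_zmod m

/-- Abstract construction of a partition tuple from residue data. -/
lemma tuple_ofFn {n : ℕ} (hn : 0 < n) {s : ℕ} (M : Fin s → ℕ) (R : Fin s → ℤ)
    (hM : ∀ i, 2 ≤ M i) (hsort : ∀ i j : Fin s, i < j → M j ≤ M i)
    (hpart : ∀ z : ℤ, ∃! i : Fin s, (M i : ℤ) ∣ z - R i) :
    IsPartitionTuple (List.ofFn fun i => Asub n (M i)) := by
  refine ⟨?_, ?_, ?_⟩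
  · rw [List.pairwise_ofFn]
    intro i j hij
    rw [index_Asub hn, index_Asub hn]
    exact hsort i j hij
  · intro H hH
    rw [List.mem_ofFn] at hH
    obtain ⟨i, rfl⟩ := hH
    refine ⟨⟨?_⟩, ?_⟩
    · rw [index_Asub hn]; have := hM i; omega
    · rw [index_Asub hn]; have := hM i; omega
  · have hl : (List.ofFn fun i => Asub n (M i)).length = s := List.length_ofFn
    refine ⟨fun i => (FreeGroup.of (⟨0, hn⟩ : Fin n)) ^ (R (Fin.cast hl i)), ?_⟩
    intro g
    obtain ⟨i0, hi0, hiu⟩ := hpart (vAux n g)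
    refine ⟨(finCongr hl).symm i0, ?_, ?_⟩
    · show g ∈ rcoset _ _
      simp only [List.get_ofFn]
      rw [mem_rcoset_Asub hn]
      have h1 : Fin.cast hl ((finCongr hl).symm i0) = i0 := by
        ext; simp
      rw [h1]
      exact hi0
    · intro j hj
      have hj' : (M (Fin.cast hl j) : ℤ) ∣ vAux n g - R (Fin.cast hl j) := by
        simp only [List.get_ofFn] at hj
        rwa [mem_rcoset_Asub hn] at hj
      have h2 := hiu _ hj'
      apply (finCongr hl).injective
      simp only [finCongr_apply]
      rw [show Fin.cast hl j = i0 from h2]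
      ext; simp

lemma firstDiff_pos {α : Type*} (l l' : List α) : 1 ≤ firstDiff l l' := by
  cases l <;> cases l' <;> unfold firstDiff <;> first | omega | (split <;> omega)

lemma firstDiff_replicate_append {α : Type*} (a : α) (l l' : List α) :
    ∀ m, firstDiff (List.replicate m a ++ l) (List.replicate m a ++ l')
      = m + firstDiff l l' := by
  intro m
  induction m with
  | zero => simp
  | succ k ih => simp [List.replicate_succ, firstDiff, ih]; omega

lemma ofFn_eq_rep₁ {α : Type*} (m : ℕ) (K H : α) :
    (List.ofFn fun i : Fin (m + 1) => if (i : ℕ) < m then K else H)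
      = List.replicate m K ++ [H] := by
  apply List.ext_getElem
  · simp
  · intro i h1 h2
    simp only [List.getElem_ofFn]
    rcases lt_or_ge i m with h | h
    · rw [List.getElem_append_left (by simpa)]
      simp [h]
    · have : i = m := by simp at h1; omega
      subst this
      rw [List.getElem_append_right (by simp)]
      simp

lemma ofFn_eq_rep₂ {α : Type*} (m : ℕ) (K H₁ H₂ : α) :
    (List.ofFn fun i : Fin (m + 2) =>
        if (i : ℕ) < m then K else if (i : ℕ) = m then H₁ else H₂)
      = List.replicate m K ++ [H₁, H₂] := by
  apply List.ext_getElem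
  · simp
  · intro i h1 h2
    simp only [List.getElem_ofFn]
    rcases lt_or_ge i m with h | h
    · rw [List.getElem_append_left (by simpa)]
      simp [h]
    · rw [List.getElem_append_right (by simpa)]
      simp only [List.length_replicate]
      have : i = m ∨ i = m + 1 := by simp at h1; omega
      rcases this with rfl | rfl
      · simp
      · simp

lemma residue_unique (m t j : ℤ) (h0 : 0 ≤ j) (h1 : j < m) (hd : m ∣ t - j) :
    j = t % m := by
  obtain ⟨c, hc⟩ := hd
  have ht : t = j + m * c := by linarith
  rw [ht, Int.add_mul_emod_self_left, Int.emod_eq_of_lt h0 h1]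

/-- `Y` is not uniformly discrete: for every `ε > 0` there are distinct partition tuples
at distance at most `ε`. -/
theorem not_uniformly_discrete (n : ℕ) (hn : 2 ≤ n) (ε : ℝ) (hε : 0 < ε) :
    ∃ P P' : List (Subgroup (FreeGroup (Fin n))),
      IsPartitionTuple P ∧ IsPartitionTuple P' ∧ P ≠ P' ∧ pdist P P' ≤ ε := by
  have hn0 : 0 < n := by omega
  obtain ⟨k, hk⟩ := exists_pow_lt_of_lt_one hε (by norm_num : (2:ℝ)⁻¹ < 1)
  obtain ⟨m, hm3, hmk⟩ : ∃ m : ℕ, 3 ≤ m ∧ k ≤ m := ⟨k + 3, by omega, by omega⟩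
  have hmZ : (0:ℤ) < (m:ℤ) := by exact_mod_cast (by omega : 0 < m)
  set M₁ : Fin (m+1) → ℕ := fun i => if (i : ℕ) < m then 2*m else 2 with hM₁
  set R₁ : Fin (m+1) → ℤ := fun i => if (i : ℕ) < m then 2*(i:ℕ)+1 else 0 with hR₁
  set M₂ : Fin (m+2) → ℕ := fun i => if (i : ℕ) < m then 2*m else 4 with hM₂
  set R₂ : Fin (m+2) → ℤ :=
    fun i => if (i : ℕ) < m then 2*(i:ℕ)+1 else if (i:ℕ) = m then 0 else 2 with hR₂
  have two_dvd_2m : (2:ℤ) ∣ 2*(m:ℤ) := ⟨m, rfl⟩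
  -- the residue classes for P₁ partition ℤ
  have hpart₁ : ∀ z : ℤ, ∃! i : Fin (m+1), ((M₁ i : ℕ) : ℤ) ∣ z - R₁ i := by
    intro z
    rcases Int.even_or_odd z with ⟨t, ht⟩ | ⟨t, ht⟩
    · refine ⟨⟨m, by omega⟩, ?_, ?_⟩
      · show ((M₁ ⟨m, by omega⟩ : ℕ) : ℤ) ∣ z - R₁ ⟨m, by omega⟩
        simp only [hM₁, hR₁, lt_self_iff_false, if_false]
        push_cast
        exact ⟨t, by omega⟩
      · rintro ⟨j, hj⟩ hd
        simp only [hM₁, hR₁] at hd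
        by_cases hjm : j < m
        · exfalso
          simp only [hjm, if_true] at hd
          push_cast at hd
          obtain ⟨c, hc⟩ := dvd_trans two_dvd_2m hd
          omega
        · apply Fin.ext; show j = m; omega
    · have hj0 : 0 ≤ t % (m:ℤ) := Int.emod_nonneg t (by omega)
      have hj1 : t % (m:ℤ) < m := Int.emod_lt_of_pos t hmZ
      obtain ⟨c, hc⟩ : (m:ℤ) ∣ t - t % m :=
        ⟨t / m, by have := Int.mul_ediv_add_emod t (m:ℤ); linarith⟩
      refine ⟨⟨(t % (m:ℤ)).toNat, by omega⟩, ?_, ?_⟩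
      · show ((M₁ ⟨(t % (m:ℤ)).toNat, by omega⟩ : ℕ) : ℤ) ∣ z - R₁ ⟨(t % (m:ℤ)).toNat, by omega⟩
        have hlt : (t % (m:ℤ)).toNat < m := by omega
        simp only [hM₁, hR₁, hlt, if_true]
        push_cast
        rw [Int.toNat_of_nonneg hj0]
        exact ⟨c, by linarith⟩
      · rintro ⟨j, hj⟩ hd
        simp only [hM₁, hR₁] at hd
        by_cases hjm : j < m
        · simp only [hjm, if_true] at hd
          push_cast at hd
          obtain ⟨d, hdd⟩ := hd
          have h1 : t - (j:ℤ) = (m:ℤ) * d := by linarith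
          have h2 : (j:ℤ) = t % (m:ℤ) :=
            residue_unique _ _ _ (by positivity) (by exact_mod_cast hjm) ⟨d, h1⟩
          apply Fin.ext; show j = (t % (m:ℤ)).toNat; omega
        · exfalso
          simp only [hjm, if_false] at hd
          obtain ⟨c', hc'⟩ := hd
          omega
  -- the residue classes for P₂ partition ℤ
  have hpart₂ : ∀ z : ℤ, ∃! i : Fin (m+2), ((M₂ i : ℕ) : ℤ) ∣ z - R₂ i := by
    intro z
    rcases Int.even_or_odd z with ⟨t, ht⟩ | ⟨t, ht⟩
    · rcases Int.even_or_odd t with ⟨u, hu⟩ | ⟨u, hu⟩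
      · refine ⟨⟨m, by omega⟩, ?_, ?_⟩
        · show ((M₂ ⟨m, by omega⟩ : ℕ) : ℤ) ∣ z - R₂ ⟨m, by omega⟩
          simp only [hM₂, hR₂, lt_self_iff_false, if_false, if_true]
          push_cast
          exact ⟨u, by omega⟩
        · rintro ⟨j, hj⟩ hd
          simp only [hM₂, hR₂] at hd
          by_cases hjm : j < m
          · exfalso
            simp only [hjm, if_true] at hd
            push_cast at hd
            obtain ⟨c, hc⟩ := dvd_trans two_dvd_2m hd
            omega
          · simp only [hjm, if_false] at hd
            by_cases hje : j = m
            · apply Fin.ext; show j = m; omega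
            · exfalso
              simp only [hje, if_false] at hd
              obtain ⟨c, hc⟩ := hd
              omega
      · refine ⟨⟨m+1, by omega⟩, ?_, ?_⟩
        · show ((M₂ ⟨m+1, by omega⟩ : ℕ) : ℤ) ∣ z - R₂ ⟨m+1, by omega⟩
          have h1 : ¬ (m+1 < m) := by omega
          have h2 : ¬ (m+1 = m) := by omega
          simp only [hM₂, hR₂, h1, h2, if_false]
          push_cast
          exact ⟨u, by omega⟩
        · rintro ⟨j, hj⟩ hd
          simp only [hM₂, hR₂] at hd
          by_cases hjm : j < m
          · exfalso
            simp only [hjm, if_true] at hd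
            push_cast at hd
            obtain ⟨c, hc⟩ := dvd_trans two_dvd_2m hd
            omega
          · simp only [hjm, if_false] at hd
            by_cases hje : j = m
            · exfalso
              simp only [hje, if_true] at hd
              obtain ⟨c, hc⟩ := hd
              omega
            · apply Fin.ext; show j = m + 1; omega
    · have hj0 : 0 ≤ t % (m:ℤ) := Int.emod_nonneg t (by omega)
      have hj1 : t % (m:ℤ) < m := Int.emod_lt_of_pos t hmZ
      obtain ⟨c, hc⟩ : (m:ℤ) ∣ t - t % m :=
        ⟨t / m, by have := Int.mul_ediv_add_emod t (m:ℤ); linarith⟩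
      refine ⟨⟨(t % (m:ℤ)).toNat, by omega⟩, ?_, ?_⟩
      · show ((M₂ ⟨(t % (m:ℤ)).toNat, by omega⟩ : ℕ) : ℤ) ∣ z - R₂ ⟨(t % (m:ℤ)).toNat, by omega⟩
        have hlt : (t % (m:ℤ)).toNat < m := by omega
        simp only [hM₂, hR₂, hlt, if_true]
        push_cast
        rw [Int.toNat_of_nonneg hj0]
        exact ⟨c, by linarith⟩
      · rintro ⟨j, hj⟩ hd
        simp only [hM₂, hR₂] at hd
        by_cases hjm : j < m
        · simp only [hjm, if_true] at hd
          push_cast at hd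
          obtain ⟨d, hdd⟩ := hd
          have h1 : t - (j:ℤ) = (m:ℤ) * d := by linarith
          have h2 : (j:ℤ) = t % (m:ℤ) :=
            residue_unique _ _ _ (by positivity) (by exact_mod_cast hjm) ⟨d, h1⟩
          apply Fin.ext; show j = (t % (m:ℤ)).toNat; omega
        · exfalso
          simp only [hjm, if_false] at hd
          by_cases hje : j = m
          · simp only [hje, if_true] at hd
            obtain ⟨c', hc'⟩ := hd
            omega
          · simp only [hje, if_false] at hd
            obtain ⟨c', hc'⟩ := hd
            omega
  -- the partition tuples
  have hT₁ := tuple_ofFn hn0 M₁ R₁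
    (by intro i; simp only [hM₁]; split <;> omega)
    (by intro i j hij; have h := Fin.lt_def.mp hij; simp only [hM₁]; split_ifs <;> omega)
    hpart₁
  have hT₂ := tuple_ofFn hn0 M₂ R₂
    (by intro i; simp only [hM₂]; split <;> omega)
    (by intro i j hij; have h := Fin.lt_def.mp hij; simp only [hM₂]; split_ifs <;> omega)
    hpart₂
  have e₁ : (List.ofFn fun i => Asub n (M₁ i))
      = List.replicate m (Asub n (2*m)) ++ [Asub n 2] := by
    rw [show (fun i => Asub n (M₁ i))
        = fun i : Fin (m+1) => if (i:ℕ) < m then Asub n (2*m) else Asub n 2 from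
      funext fun i => by simp only [hM₁, apply_ite (Asub n)]]
    exact ofFn_eq_rep₁ m _ _
  have e₂ : (List.ofFn fun i => Asub n (M₂ i))
      = List.replicate m (Asub n (2*m)) ++ [Asub n 4, Asub n 4] := by
    rw [show (fun i => Asub n (M₂ i))
        = fun i : Fin (m+2) => if (i:ℕ) < m then Asub n (2*m)
            else if (i:ℕ) = m then Asub n 4 else Asub n 4 from
      funext fun i => by simp only [hM₂, apply_ite (Asub n)]; split_ifs <;> rfl]
    exact ofFn_eq_rep₂ m _ _ _
  rw [e₁] at hT₁
  rw [e₂] at hT₂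
  refine ⟨_, _, hT₁, hT₂, ?_, ?_⟩
  · intro h
    have := congrArg List.length h
    simp at this
  · have hne : List.replicate m (Asub n (2*m)) ++ [Asub n 2]
        ≠ List.replicate m (Asub n (2*m)) ++ [Asub n 4, Asub n 4] := by
      intro h
      have := congrArg List.length h
      simp at this
    rw [pdist, if_neg hne, firstDiff_replicate_append]
    have hfd := firstDiff_pos [Asub n 2] [Asub n 4, Asub n 4]
    calc (2:ℝ)⁻¹ ^ (m + firstDiff [Asub n 2] [Asub n 4, Asub n 4])
        ≤ (2:ℝ)⁻¹ ^ k := by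
          apply pow_le_pow_of_le_one (by norm_num) (by norm_num)
          omega
      _ ≤ ε := le_of_lt hk
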